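/- Let p ≥ 2 and q its conjugate exponent, γ = q(q−1)/8, and define B : ℝ^{N₁} × ℝ^{N₂} → [0,∞) by B(η,ζ) = (1/2)(‖η‖^p + ‖ζ‖^q + γ(2/p·‖η‖^p + (2/q − 1)‖ζ‖^q)) on the region R₂ = {(η,ζ) : ‖η‖^p > ‖ζ‖^q, ζ ≠ 0}. Then for every (η,ζ) ∈ R₂ and every ω = (ω₁, ω₂) ∈ ℝ^{N₁} × ℝ^{N₂}, the Hessian quadratic form of B at (η,ζ) satisfies ⟨Hess B(η,ζ)ω, ω⟩ ≥ (1/2)((p−1)‖η‖^(p−2)‖ω₁‖² + (q−1)‖ζ‖^(q−2)‖ω₂‖²). -/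

import Mathlib

set_option maxHeartbeats 2000000

open Real ContinuousLinearMap

theorem aux_hasFDerivAt_norm_rpow {E : Type*} [NormedAddCommGroup E] [InnerProductSpace ℝ E]
    {x : E} (hx : x ≠ 0) (s : ℝ) :
    HasFDerivAt (fun y : E => ‖y‖ ^ s) ((s * ‖x‖ ^ (s - 2)) • innerSL ℝ x) x := by
  apply HasStrictFDerivAt.hasFDerivAt
  convert (hasStrictFDerivAt_norm_sq x).rpow_const (p := s / 2) (by simp [hx]) using 0
  simp_rw [← Real.rpow_natCast_mul (norm_nonneg _), ← Nat.cast_smul_eq_nsmul ℝ, smul_smul]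
  ring_nf

/-- Hessian lower bound for the Nazarov–Treil Bellman function in the region
`R₂ = {(η,ζ) : ‖η‖^p > ‖ζ‖^q, ζ ≠ 0}`. -/
theorem stmt_5 (N₁ N₂ : ℕ) (p q : ℝ) (hp : 2 ≤ p) (hq : 1 < q) (hpq : 1 / p + 1 / q = 1)
    (γ : ℝ) (hγ : γ = q * (q - 1) / 8)
    (B : EuclideanSpace ℝ (Fin N₁) × EuclideanSpace ℝ (Fin N₂) → ℝ)
    (hB : ∀ z : EuclideanSpace ℝ (Fin N₁) × EuclideanSpace ℝ (Fin N₂),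
      B z = (1 / 2) * (‖z.1‖ ^ p + ‖z.2‖ ^ q +
        γ * (2 / p * ‖z.1‖ ^ p + (2 / q - 1) * ‖z.2‖ ^ q)))
    (η : EuclideanSpace ℝ (Fin N₁)) (ζ : EuclideanSpace ℝ (Fin N₂))
    (hζ : ζ ≠ 0) (hR : ‖η‖ ^ p > ‖ζ‖ ^ q)
    (ω₁ : EuclideanSpace ℝ (Fin N₁)) (ω₂ : EuclideanSpace ℝ (Fin N₂)) :
    (iteratedFDeriv ℝ 2 B (η, ζ)) ![(ω₁, ω₂), (ω₁, ω₂)] ≥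
      (1 / 2) * ((p - 1) * ‖η‖ ^ (p - 2) * ‖ω₁‖ ^ 2
        + (q - 1) * ‖ζ‖ ^ (q - 2) * ‖ω₂‖ ^ 2) := by
  have hp0 : (0:ℝ) < p := lt_of_lt_of_le zero_lt_two hp
  have hq0 : (0:ℝ) < q := lt_trans zero_lt_one hq
  have hp1 : (1:ℝ) < p := lt_of_lt_of_le one_lt_two hp
  have hq2 : q ≤ 2 := by
    have h1 : 1/p ≤ 1/2 := by
      rw [div_le_div_iff₀ hp0 zero_lt_two]; linarith
    have h2 : (1:ℝ)/2 ≤ 1/q := by linarith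
    have h3 : (1/q) * q = 1 := one_div_mul_cancel hq0.ne'
    nlinarith
  have hγ0 : 0 < γ := by rw [hγ]; nlinarith
  have hζn : 0 < ‖ζ‖ := norm_pos_iff.mpr hζ
  have hη : η ≠ 0 := by
    intro h
    rw [h] at hR
    simp only [norm_zero] at hR
    rw [Real.zero_rpow hp0.ne'] at hR
    exact absurd hR (not_lt.mpr (Real.rpow_pos_of_pos hζn q).le)
  have hηn : 0 < ‖η‖ := norm_pos_iff.mpr hη
  set a : ℝ := (1/2) * (1 + γ * (2/p)) with ha
  set b : ℝ := (1/2) * (1 + γ * (2/q - 1)) with hb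
  have hBeq : B = fun z : EuclideanSpace ℝ (Fin N₁) × EuclideanSpace ℝ (Fin N₂) =>
      a * ‖z.1‖ ^ p + b * ‖z.2‖ ^ q := by
    funext z; rw [hB]; ring
  -- first derivative
  have hΦ : ∀ z : EuclideanSpace ℝ (Fin N₁) × EuclideanSpace ℝ (Fin N₂),
      HasFDerivAt B
        ((a * p * ‖z.1‖ ^ (p - 2)) • ((innerSL ℝ z.1).comp (fst ℝ _ _)) +
         (b * q * ‖z.2‖ ^ (q - 2)) • ((innerSL ℝ z.2).comp (snd ℝ _ _))) z := by
    intro z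
    rw [hBeq]
    have h1 := (hasFDerivAt_norm_rpow z.1 hp1).comp z hasFDerivAt_fst
    have h2 := (hasFDerivAt_norm_rpow z.2 hq).comp z hasFDerivAt_snd
    have h3 := (h1.const_mul a).add (h2.const_mul b)
    refine h3.congr_fderiv ?_
    refine ContinuousLinearMap.ext fun w => ?_
    simp only [ContinuousLinearMap.add_apply, ContinuousLinearMap.smul_apply,
      ContinuousLinearMap.comp_apply, ContinuousLinearMap.coe_fst', ContinuousLinearMap.coe_snd',
      ContinuousLinearMap.smul_comp, smul_eq_mul]
    ring
  have hfB : fderiv ℝ B = fun z : EuclideanSpace ℝ (Fin N₁) × EuclideanSpace ℝ (Fin N₂) =>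
      (a * p * ‖z.1‖ ^ (p - 2)) • ((innerSL ℝ z.1).comp (fst ℝ _ _)) +
      (b * q * ‖z.2‖ ^ (q - 2)) • ((innerSL ℝ z.2).comp (snd ℝ _ _)) :=
    funext fun z => (hΦ z).fderiv
  -- pieces for the second derivative
  set T₁ : EuclideanSpace ℝ (Fin N₁) →L[ℝ]
      ((EuclideanSpace ℝ (Fin N₁) × EuclideanSpace ℝ (Fin N₂)) →L[ℝ] ℝ) :=
    ((compL ℝ (EuclideanSpace ℝ (Fin N₁) × EuclideanSpace ℝ (Fin N₂))
        (EuclideanSpace ℝ (Fin N₁)) ℝ).flip (fst ℝ _ _)).comp (innerSL ℝ) with hT₁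
  set T₂ : EuclideanSpace ℝ (Fin N₂) →L[ℝ]
      ((EuclideanSpace ℝ (Fin N₁) × EuclideanSpace ℝ (Fin N₂)) →L[ℝ] ℝ) :=
    ((compL ℝ (EuclideanSpace ℝ (Fin N₁) × EuclideanSpace ℝ (Fin N₂))
        (EuclideanSpace ℝ (Fin N₂)) ℝ).flip (snd ℝ _ _)).comp (innerSL ℝ) with hT₂
  have hm₁ : HasFDerivAt
      (fun z : EuclideanSpace ℝ (Fin N₁) × EuclideanSpace ℝ (Fin N₂) =>
        (innerSL ℝ z.1).comp (fst ℝ _ _))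
      (T₁.comp (fst ℝ _ _)) (η, ζ) := by
    have hfun : ⇑(T₁.comp (fst ℝ (EuclideanSpace ℝ (Fin N₁)) (EuclideanSpace ℝ (Fin N₂)))) =
        fun z : EuclideanSpace ℝ (Fin N₁) × EuclideanSpace ℝ (Fin N₂) =>
          (innerSL ℝ z.1).comp (fst ℝ _ _) := by
      funext z
      refine ContinuousLinearMap.ext fun w => ?_
      simp [hT₁]
    have h := (T₁.comp (fst ℝ (EuclideanSpace ℝ (Fin N₁)) (EuclideanSpace ℝ (Fin N₂)))).hasFDerivAt
      (x := (η, ζ))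
    rwa [hfun] at h
  have hm₂ : HasFDerivAt
      (fun z : EuclideanSpace ℝ (Fin N₁) × EuclideanSpace ℝ (Fin N₂) =>
        (innerSL ℝ z.2).comp (snd ℝ _ _))
      (T₂.comp (snd ℝ _ _)) (η, ζ) := by
    have hfun : ⇑(T₂.comp (snd ℝ (EuclideanSpace ℝ (Fin N₁)) (EuclideanSpace ℝ (Fin N₂)))) =
        fun z : EuclideanSpace ℝ (Fin N₁) × EuclideanSpace ℝ (Fin N₂) =>
          (innerSL ℝ z.2).comp (snd ℝ _ _) := by
      funext z
      refine ContinuousLinearMap.ext fun w => ?_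
      simp [hT₂]
    have h := (T₂.comp (snd ℝ (EuclideanSpace ℝ (Fin N₁)) (EuclideanSpace ℝ (Fin N₂)))).hasFDerivAt
      (x := (η, ζ))
    rwa [hfun] at h
  have hc₁ : HasFDerivAt
      (fun z : EuclideanSpace ℝ (Fin N₁) × EuclideanSpace ℝ (Fin N₂) => a * p * ‖z.1‖ ^ (p - 2))
      ((a * p) • ((((p - 2) * ‖η‖ ^ (p - 2 - 2)) • innerSL ℝ η).comp (fst ℝ _ _))) (η, ζ) :=
    by have h := (aux_hasFDerivAt_norm_rpow hη (p - 2)).comp (η, ζ) (hasFDerivAt_fst (𝕜 := ℝ) (E := EuclideanSpace ℝ (Fin N₁)) (F := EuclideanSpace ℝ (Fin N₂)) (p := (η, ζ))); exact h.const_mul (a * p)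
  have hc₂ : HasFDerivAt
      (fun z : EuclideanSpace ℝ (Fin N₁) × EuclideanSpace ℝ (Fin N₂) => b * q * ‖z.2‖ ^ (q - 2))
      ((b * q) • ((((q - 2) * ‖ζ‖ ^ (q - 2 - 2)) • innerSL ℝ ζ).comp (snd ℝ _ _))) (η, ζ) :=
    by have h := (aux_hasFDerivAt_norm_rpow hζ (q - 2)).comp (η, ζ) (hasFDerivAt_snd (𝕜 := ℝ) (E := EuclideanSpace ℝ (Fin N₁)) (F := EuclideanSpace ℝ (Fin N₂)) (p := (η, ζ))); exact h.const_mul (b * q)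
  have hsum := (hc₁.smul hm₁).add (hc₂.smul hm₂)
  have hfd2 : fderiv ℝ (fderiv ℝ B) (η, ζ) =
      ((a * p * ‖η‖ ^ (p - 2)) •
          (T₁.comp (fst ℝ (EuclideanSpace ℝ (Fin N₁)) (EuclideanSpace ℝ (Fin N₂)))) +
        ((a * p) • ((((p - 2) * ‖η‖ ^ (p - 2 - 2)) • innerSL ℝ η).comp
          (fst ℝ (EuclideanSpace ℝ (Fin N₁)) (EuclideanSpace ℝ (Fin N₂))))).smulRight
          ((innerSL ℝ η).comp (fst ℝ (EuclideanSpace ℝ (Fin N₁)) (EuclideanSpace ℝ (Fin N₂))))) +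
      ((b * q * ‖ζ‖ ^ (q - 2)) •
          (T₂.comp (snd ℝ (EuclideanSpace ℝ (Fin N₁)) (EuclideanSpace ℝ (Fin N₂)))) +
        ((b * q) • ((((q - 2) * ‖ζ‖ ^ (q - 2 - 2)) • innerSL ℝ ζ).comp
          (snd ℝ (EuclideanSpace ℝ (Fin N₁)) (EuclideanSpace ℝ (Fin N₂))))).smulRight
          ((innerSL ℝ ζ).comp (snd ℝ (EuclideanSpace ℝ (Fin N₁)) (EuclideanSpace ℝ (Fin N₂))))) := by
    rw [hfB]
    exact hsum.fderiv
  rw [iteratedFDeriv_two_apply, hfd2]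
  simp only [Matrix.cons_val_zero, Matrix.cons_val_one, Matrix.head_cons,
    ContinuousLinearMap.add_apply, ContinuousLinearMap.smul_apply,
    ContinuousLinearMap.smulRight_apply, ContinuousLinearMap.comp_apply,
    ContinuousLinearMap.flip_apply, ContinuousLinearMap.coe_fst', ContinuousLinearMap.coe_snd',
    innerSL_apply_apply, smul_eq_mul, hT₁, hT₂, ContinuousLinearMap.compL_apply]
  rw [real_inner_self_eq_norm_sq, real_inner_self_eq_norm_sq]
  clear hfd2 hsum hc₁ hc₂ hm₁ hm₂ hfB hΦ hBeq hB hT₁ hT₂ T₁ T₂ B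
  set I₁ : ℝ := inner ℝ η ω₁ with hI₁
  set I₂ : ℝ := inner ℝ ζ ω₂ with hI₂
  have hK1 : (0:ℝ) < ‖η‖ ^ (p - 2) := Real.rpow_pos_of_pos hηn _
  have hK2 : (0:ℝ) < ‖ζ‖ ^ (q - 2) := Real.rpow_pos_of_pos hζn _
  have hK2' : (0:ℝ) < ‖ζ‖ ^ (q - 2 - 2) := Real.rpow_pos_of_pos hζn _
  have hK1' : (0:ℝ) ≤ ‖η‖ ^ (p - 2 - 2) := (Real.rpow_pos_of_pos hηn _).le
  have ha2 : (1:ℝ)/2 ≤ a := by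
    rw [ha]
    have h0 : 0 ≤ γ * (2/p) := mul_nonneg hγ0.le (div_pos zero_lt_two hp0).le
    linarith
  have hb2 : (1:ℝ)/2 ≤ b := by
    have h2q : (0:ℝ) ≤ 2/q - 1 := by
      have : (1:ℝ) ≤ 2/q := (le_div_iff₀ hq0).mpr (by linarith)
      linarith
    have h0 : 0 ≤ γ * (2/q - 1) := mul_nonneg hγ0.le h2q
    rw [hb]; linarith
  have ha0 : (0:ℝ) < a := by linarith
  have hb0 : (0:ℝ) < b := by linarith
  have hap : (p-1)/2 ≤ a*p := by
    have h := mul_le_mul_of_nonneg_right ha2 hp0.le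
    linarith
  have hbq : (1:ℝ)/2 ≤ b*q := by
    have h := mul_le_mul_of_nonneg_right hb2 hq0.le
    linarith
  have hCS : I₂^2 ≤ ‖ζ‖^2 * ‖ω₂‖^2 := by
    have h := real_inner_mul_inner_self_le ζ ω₂
    rw [real_inner_self_eq_norm_sq, real_inner_self_eq_norm_sq] at h
    linarith [h]
  have hprod : ‖ζ‖ ^ (q - 2 - 2) * ‖ζ‖^2 = ‖ζ‖ ^ (q - 2) := by
    rw [← Real.rpow_natCast ‖ζ‖ 2, ← Real.rpow_add hζn]
    norm_num
  have hc : (0:ℝ) ≤ b*q*(2-q)*‖ζ‖^(q-2-2) :=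
    mul_nonneg (mul_nonneg (mul_nonneg hb0.le hq0.le) (by linarith)) hK2'.le
  have hkey2 : b*q*(2-q)*‖ζ‖^(q-2-2)*I₂^2 ≤ b*q*(2-q)*(‖ζ‖^(q-2))*‖ω₂‖^2 := by
    calc b*q*(2-q)*‖ζ‖^(q-2-2)*I₂^2
        ≤ b*q*(2-q)*‖ζ‖^(q-2-2) * (‖ζ‖^2*‖ω₂‖^2) := mul_le_mul_of_nonneg_left hCS hc
      _ = b*q*(2-q)*(‖ζ‖^(q-2))*‖ω₂‖^2 := by rw [← hprod]; ring
  have hF1 : (0:ℝ) ≤ a*p*(p-2)*‖η‖^(p-2-2)*I₁^2 :=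
    mul_nonneg (mul_nonneg (mul_nonneg (mul_nonneg ha0.le hp0.le) (by linarith)) hK1')
      (sq_nonneg I₁)
  have hF3 : (p-1)/2 * (‖η‖^(p-2) * ‖ω₁‖^2) ≤ a*p * (‖η‖^(p-2) * ‖ω₁‖^2) :=
    mul_le_mul_of_nonneg_right hap (mul_nonneg hK1.le (sq_nonneg _))
  have hF4 : (1:ℝ)/2 * ((q-1) * ‖ζ‖^(q-2) * ‖ω₂‖^2) ≤ b*q * ((q-1) * ‖ζ‖^(q-2) * ‖ω₂‖^2) :=
    mul_le_mul_of_nonneg_right hbq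
      (mul_nonneg (mul_nonneg (by linarith) hK2.le) (sq_nonneg _))
  linarith [hF1, hF3, hF4, hkey2]
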